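/- Fix κ, ρ ∈ (0,∞). For each n let (X_n(T))_{T≥0} be the edge reconnecting model with parameter κ on A_n^{m(n)} with vertex exchangeable initial state X_n(0); assume lim_n 2m(n)/n² = ρ, and that there exist λ ∈ (0, κ/ρ) and C < ∞ with E[e^{λ X_n(0,i,j)}] ≤ C for all n and all i,j ∈ [n]. Then there exists n' ∈ ℕ such that for every t, z ∈ [0,∞), every n ≥ n' and every i ∈ [n]: P( max_{0 ≤ T ≤ 2m(n)·n·t} (1/n)·d(X_n(T),i) ≥ z ) ≤ C·e^{2λκt}·e^{−λz}. -/

import Mathlib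

open MeasureTheory Filter Set
open scoped Classical ENNReal Topology BigOperators

noncomputable section

/-- `B : ℕ → ℕ → ℕ` is the adjacency matrix of a multigraph on vertex set `{0,…,n-1}`:
symmetric, even diagonal entries (loops counted twice), vanishing outside `[0,n)²`. -/
def IsAdjOn (n : ℕ) (B : ℕ → ℕ → ℕ) : Prop :=
  (∀ i j, B i j = B j i) ∧ (∀ i, 2 ∣ B i i) ∧ ∀ i j, n ≤ i ∨ n ≤ j → B i j = 0

/-- Degree `d(B,i)` of vertex `i` in a multigraph on `n` vertices. -/
def degB (n : ℕ) (B : ℕ → ℕ → ℕ) (i : ℕ) : ℕ := ∑ j ∈ Finset.range n, B i j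

/-- Adjacency matrix of a multigraph on `n` vertices with `m` edges. -/
def IsAdjOnM (n m : ℕ) (B : ℕ → ℕ → ℕ) : Prop :=
  IsAdjOn n B ∧ ∑ i ∈ Finset.range n, ∑ j ∈ Finset.range n, B i j = 2 * m

/-- Top-left `k × k` submatrix (set to zero outside). -/
def subMat (k : ℕ) (B : ℕ → ℕ → ℕ) : ℕ → ℕ → ℕ :=
  fun i j => if i < k ∧ j < k then B i j else 0

/-- Induced homomorphism density `t_=(A,B)` of a `k`-vertex multigraph in an `n`-vertex one. -/
def tEqB (k n : ℕ) (A B : ℕ → ℕ → ℕ) : ℝ :=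
  ((Finset.univ.filter fun φ : Fin k → Fin n =>
      ∀ i j : Fin k, A i j = B (φ i) (φ j)).card : ℝ) / (n : ℝ) ^ k

/-- A multigraphon: symmetric, probability distribution on ℕ in each fibre over `[0,1]²`,
no odd diagonal values. -/
def IsMultigraphon (W : ℝ → ℝ → ℕ → ℝ) : Prop :=
  Measurable (fun p : ℝ × ℝ × ℕ => W p.1 p.2.1 p.2.2) ∧
  (∀ x y k, 0 ≤ W x y k ∧ W x y k ≤ 1) ∧
  (∀ x y k, W x y k = W y x k) ∧
  (∀ x ∈ Icc (0:ℝ) 1, ∀ y ∈ Icc (0:ℝ) 1, (∑' k : ℕ, W x y k) = 1) ∧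
  (∀ x k, W x x (2 * k + 1) = 0)

/-- Induced homomorphism density `t_=(A,W)` of a multigraph in a multigraphon. -/
def tEqW (k : ℕ) (A : ℕ → ℕ → ℕ) (W : ℝ → ℝ → ℕ → ℝ) : ℝ :=
  ∫ x : Fin k → ℝ in Set.univ.pi (fun _ : Fin k => Icc (0:ℝ) 1),
    ∏ i : Fin k, ∏ j ∈ Finset.univ.filter (fun j : Fin k => i ≤ j),
      W (x i) (x j) (A i j)

/-- The average degree `D(W,x)` of a multigraphon at `x`. -/
def degW (W : ℝ → ℝ → ℕ → ℝ) (x : ℝ) : ℝ :=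
  ∫ y in Icc (0:ℝ) 1, ∑' k : ℕ, (k : ℝ) * W x y k

/-- The edge density `ρ(W)` of a multigraphon. -/
def rhoW (W : ℝ → ℝ → ℕ → ℝ) : ℝ := ∫ x in Icc (0:ℝ) 1, degW W x

/-- One step of the edge reconnecting dynamics: the edge `{vold, w}` is replaced by `{vnew, w}`. -/
def stepER (B : ℕ → ℕ → ℕ) (vold w vnew : ℕ) : ℕ → ℕ → ℕ := fun a b =>
  B a b - (if a = vold ∧ b = w then 1 else 0) - (if a = w ∧ b = vold then 1 else 0)
    + (if a = vnew ∧ b = w then 1 else 0) + (if a = w ∧ b = vnew then 1 else 0)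

/-- Transition probability of the edge reconnecting model with parameter `κ`
on multigraphs with `n` vertices and `m` edges. -/
def transER (κ : ℝ) (n m : ℕ) (B B' : ℕ → ℕ → ℕ) : ℝ :=
  ∑ v ∈ Finset.range n, ∑ w ∈ Finset.range n, ∑ u ∈ Finset.range n,
    ((B v w : ℝ) / (2 * m)) * (((degB n B u : ℝ) + κ) / (2 * m + n * κ)) *
      (if B' = stepER B v w u then 1 else 0)

/-- `(X T)_{T≥0}` is an edge reconnecting model with parameter `κ` on `A_n^m`:
a Markov chain with the edge reconnecting transition probabilities. -/
def IsEdgeReconnecting (κ : ℝ) {Ω : Type*} [MeasurableSpace Ω] (μ : Measure Ω)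
    (n m : ℕ) (X : ℕ → Ω → ℕ → ℕ → ℕ) : Prop :=
  (∀ T i j, Measurable fun ω => X T ω i j) ∧
  (∀ T ω, IsAdjOnM n m (X T ω)) ∧
  ∀ (T : ℕ) (past : ℕ → ℕ → ℕ → ℕ) (B' : ℕ → ℕ → ℕ),
    μ {ω | (∀ S ≤ T, X S ω = past S) ∧ X (T + 1) ω = B'} =
      μ {ω | ∀ S ≤ T, X S ω = past S} * ENNReal.ofReal (transER κ n m (past T) B')

/-- Vertex exchangeability of a random adjacency matrix on `n` vertices. -/
def VertexExchangeable {Ω : Type*} [MeasurableSpace Ω] (μ : Measure Ω)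
    (n : ℕ) (X0 : Ω → ℕ → ℕ → ℕ) : Prop :=
  ∀ τ : Equiv.Perm ℕ, (∀ i, n ≤ i → τ i = i) →
    ∀ B : ℕ → ℕ → ℕ, μ {ω | X0 ω = B} = μ {ω | (fun i j => X0 ω (τ i) (τ j)) = B}

/-- Poisson point probability `p(k,λ)`. -/
def poiP (k : ℕ) (l : ℝ) : ℝ := Real.exp (-l) * l ^ k / (Nat.factorial k : ℝ)

/-- Binomial point probability `b(k,n,p)`. -/
def binP (k n : ℕ) (p : ℝ) : ℝ := (n.choose k : ℝ) * p ^ k * (1 - p) ^ (n - k)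

/-- `q(t,h,k,μ)`: time-`t` transition probability from `h` to `k` of the M/M/∞ queue with
arrival rate `μ` and service rate 1. -/
def qMM (t : ℝ) (h k : ℕ) (μ : ℝ) : ℝ :=
  ∑ l ∈ Finset.range (k + 1), binP l h (Real.exp (-t)) * poiP (k - l) ((1 - Real.exp (-t)) * μ)

/-- The multigraphon `W_t` describing the edge reconnecting model on the `n²` time scale. -/
def WtER (W : ℝ → ℝ → ℕ → ℝ) (t : ℝ) : ℝ → ℝ → ℕ → ℝ := fun x y k =>
  if x = y then
    (if 2 ∣ k then
      ∑' h : ℕ, W x x (2 * h) * qMM t h (k / 2) (degW W x ^ 2 / (2 * rhoW W))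
     else 0)
  else ∑' h : ℕ, W x y h * qMM t h k (degW W x * degW W y / rhoW W)

/-- Gamma density `g(x,α,β)`. -/
def gamP (x α β : ℝ) : ℝ :=
  if 0 < x then x ^ (α - 1) * (β ^ α * Real.exp (-(β * x)) / Real.Gamma α) else 0

/-- `τ(α,t) = α/(e^{αt}-1)`. -/
def tauCIR (α t : ℝ) : ℝ := α / (Real.exp (α * t) - 1)

/-- Transition density `f(t,z,y)` of the Cox–Ingersoll–Ross process with parameters `κ, ρ`. -/
def cirDens (κ ρ t z y : ℝ) : ℝ :=
  ∑' i : ℕ, poiP i (z * tauCIR (κ / ρ) t) * gamP y ((κ : ℝ) + i) (tauCIR (κ / ρ) t + κ / ρ)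

/-- The measure `dF₀` where `F₀(x) = Leb{y ∈ [0,1] : D(W,y) ≤ x}`: the push-forward of
Lebesgue measure on `[0,1]` under the average degree function. -/
def F0meas (W : ℝ → ℝ → ℕ → ℝ) : Measure ℝ :=
  Measure.map (degW W) (volume.restrict (Icc (0:ℝ) 1))

/-- The distribution function `F₀(x) = Leb{y ∈ [0,1] : D(W,y) ≤ x}`. -/
def F0fun (W : ℝ → ℝ → ℕ → ℝ) (x : ℝ) : ℝ :=
  (volume {y ∈ Icc (0:ℝ) 1 | degW W y ≤ x}).toReal

/-- Generalized inverse `F₀⁻¹(x) = min{z : F₀(z) ≥ x}`. -/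
def F0inv (W : ℝ → ℝ → ℕ → ℝ) (x : ℝ) : ℝ := sInf {z : ℝ | x ≤ F0fun W z}

/-- The mixed CIR density `f(t,y) = ∫₀^∞ f(t,z,y) dF₀(z)`. -/
def fCIRmix (κ ρ : ℝ) (W : ℝ → ℝ → ℕ → ℝ) (t y : ℝ) : ℝ :=
  ∫ z, cirDens κ ρ t z y ∂(F0meas W)

/-- The distribution function `F_t(x) = ∫₀ˣ f(t,y) dy`. -/
def Fcir (κ ρ : ℝ) (W : ℝ → ℝ → ℕ → ℝ) (t x : ℝ) : ℝ :=
  ∫ y in Ioc (0:ℝ) x, fCIRmix κ ρ W t y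

/-- Generalized inverse `F_t⁻¹(x) = min{z : F_t(z) ≥ x}`. -/
def FcirInv (κ ρ : ℝ) (W : ℝ → ℝ → ℕ → ℝ) (t x : ℝ) : ℝ :=
  sInf {z : ℝ | x ≤ Fcir κ ρ W t z}

/-- The multigraphon `Ŵ_t` describing the edge reconnecting model on the `n³` time scale. -/
def WhatER (κ : ℝ) (W : ℝ → ℝ → ℕ → ℝ) (t : ℝ) : ℝ → ℝ → ℕ → ℝ := fun x y k =>
  if x = y then
    (if 2 ∣ k then poiP (k / 2) (FcirInv κ (rhoW W) W t x ^ 2 / (2 * rhoW W)) else 0)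
  else poiP k (FcirInv κ (rhoW W) W t x * FcirInv κ (rhoW W) W t y / rhoW W)

/-- The product measure on `ℝ^k` of `k` i.i.d. coordinates with density `f(t,·)`. -/
def cirPi (κ ρ : ℝ) (W : ℝ → ℝ → ℕ → ℝ) (t : ℝ) (k : ℕ) : Measure (Fin k → ℝ) :=
  volume.withDensity fun z => ∏ i : Fin k, ENNReal.ofReal (fCIRmix κ ρ W t (z i))

/-- Condition (E): uniform exponential moment bound for the initial multigraphs. -/
def CondE (B : (n : ℕ) → ℕ → ℕ → ℕ) : Prop :=
  ∃ lam : ℝ, 0 < lam ∧ ∃ C : ℝ, ∀ n : ℕ,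
    (∑ i ∈ Finset.range n, ∑ j ∈ (Finset.range n).filter (fun j => i < j),
        Real.exp (lam * (B n i j : ℝ))) ≤ C * (n.choose 2 : ℝ) ∧
    (∑ i ∈ Finset.range n, Real.exp (lam * (B n i i : ℝ))) ≤ C * (n : ℝ)

/-- Convergence `B_n → W` of a sequence of multigraphs to a multigraphon. -/
def GraphSeqConvTo (B : (n : ℕ) → ℕ → ℕ → ℕ) (W : ℝ → ℝ → ℕ → ℝ) : Prop :=
  ∀ (k : ℕ) (A : ℕ → ℕ → ℕ), IsAdjOn k A →
    Tendsto (fun n => tEqB k n A (B n)) atTop (𝓝 (tEqW k A W))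


set_option maxHeartbeats 1600000

namespace ERaux

/-- All symmetric-matrix candidates: functions supported on `[0,n)²` with entries `≤ 2m`. -/
def SFin (n m : ℕ) : Finset (ℕ → ℕ → ℕ) :=
  (Finset.univ : Finset (Fin n → Fin n → Fin (2 * m + 1))).image
    (fun f a b => if h : a < n ∧ b < n then (f ⟨a, h.1⟩ ⟨b, h.2⟩ : ℕ) else 0)

lemma entry_le {n m : ℕ} {B : ℕ → ℕ → ℕ} (hB : IsAdjOnM n m B) {a b : ℕ}
    (ha : a < n) (hb : b < n) : B a b ≤ 2 * m := by
  calc B a b ≤ ∑ j ∈ Finset.range n, B a j :=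
        Finset.single_le_sum (f := fun j => B a j) (fun _ _ => Nat.zero_le _)
          (Finset.mem_range.2 hb)
    _ ≤ ∑ i ∈ Finset.range n, ∑ j ∈ Finset.range n, B i j :=
        Finset.single_le_sum (f := fun i => ∑ j ∈ Finset.range n, B i j)
          (fun _ _ => Nat.zero_le _) (Finset.mem_range.2 ha)
    _ = 2 * m := hB.2

lemma mem_SFin {n m : ℕ} {B : ℕ → ℕ → ℕ} (hB : IsAdjOnM n m B) : B ∈ SFin n m := by
  refine Finset.mem_image.2 ⟨fun a b => ⟨B a.1 b.1, Nat.lt_succ_of_le (entry_le hB a.2 b.2)⟩,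
    Finset.mem_univ _, ?_⟩
  funext a b
  by_cases h : a < n ∧ b < n
  · simp [h]
  · rw [dif_neg h]
    rcases not_and_or.1 h with h' | h'
    · exact (hB.1.2.2 a b (Or.inl (le_of_not_gt h'))).symm
    · exact (hB.1.2.2 a b (Or.inr (le_of_not_gt h'))).symm

/-- Extend a path by one state at time `T`. -/
def ext (T : ℕ) (q : ℕ → ℕ → ℕ → ℕ) (B : ℕ → ℕ → ℕ) : ℕ → ℕ → ℕ → ℕ :=
  fun S => if S = T then B else q S

lemma ext_apply (T : ℕ) (q : ℕ → ℕ → ℕ → ℕ) (B : ℕ → ℕ → ℕ) (S : ℕ) :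
    ext T q B S = if S = T then B else q S := rfl

/-- Finite set of paths of length `T+1` through `SFin n m`, padded by `0` beyond `T`. -/
def Path (n m : ℕ) : ℕ → Finset (ℕ → ℕ → ℕ → ℕ)
  | 0 => (SFin n m).image (fun B S => if S = 0 then B else fun _ _ => 0)
  | T + 1 => ((Path n m T) ×ˢ (SFin n m)).image (fun x => ext (T + 1) x.1 x.2)

lemma Path_eq_zero {n m : ℕ} : ∀ {T : ℕ} {p : ℕ → ℕ → ℕ → ℕ}, p ∈ Path n m T →
    ∀ S, T < S → p S = fun _ _ => 0 := by
  intro T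
  induction T with
  | zero =>
    intro p hp S hS
    rcases Finset.mem_image.1 hp with ⟨B, _, rfl⟩
    simp only []
    rw [if_neg (by omega : ¬ S = 0)]
  | succ T ih =>
    intro p hp S hS
    rcases Finset.mem_image.1 hp with ⟨x, hx, rfl⟩
    have hx1 := (Finset.mem_product.1 hx).1
    simp only [ext]
    rw [if_neg (by omega)]
    exact ih hx1 S (by omega)

lemma mem_Path {n m : ℕ} : ∀ {T : ℕ} {q : ℕ → ℕ → ℕ → ℕ},
    (∀ S ≤ T, q S ∈ SFin n m) → (∀ S, T < S → q S = fun _ _ => 0) → q ∈ Path n m T := by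
  intro T
  induction T with
  | zero =>
    intro q h1 h2
    refine Finset.mem_image.2 ⟨q 0, h1 0 le_rfl, ?_⟩
    funext S
    by_cases hS : S = 0
    · simp [hS]
    · rw [if_neg hS, h2 S (Nat.pos_of_ne_zero hS)]
  | succ T ih =>
    intro q h1 h2
    refine Finset.mem_image.2 ⟨⟨fun S => if S ≤ T then q S else fun _ _ => 0, q (T + 1)⟩,
      Finset.mem_product.2 ⟨?_, h1 (T + 1) le_rfl⟩, ?_⟩
    · refine ih (fun S hS => ?_) (fun S hS => ?_)
      · simp only []
        rw [if_pos hS]; exact h1 S (hS.trans (Nat.le_succ _))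
      · simp only []
        rw [if_neg (by omega)]
    · funext S
      simp only [ext]
      by_cases hS : S = T + 1
      · simp [hS]
      · rw [if_neg hS]
        by_cases hS' : S ≤ T
        · rw [if_pos hS']
        · rw [if_neg hS', h2 S (by omega)]



lemma step_cast {B : ℕ → ℕ → ℕ} (hsym : ∀ i j, B i j = B j i) (hdiag : ∀ i, 2 ∣ B i i)
    {v w : ℕ} (hvw : 1 ≤ B v w) (u a b : ℕ) :
    (stepER B v w u a b : ℤ) = (B a b : ℤ) - (if a = v ∧ b = w then 1 else 0)
      - (if a = w ∧ b = v then 1 else 0) + (if a = u ∧ b = w then 1 else 0)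
      + (if a = w ∧ b = u then 1 else 0) := by
  have hge : (if a = v ∧ b = w then (1:ℕ) else 0) + (if a = w ∧ b = v then 1 else 0) ≤ B a b := by
    by_cases h1 : a = v ∧ b = w
    · by_cases h2 : a = w ∧ b = v
      · obtain ⟨e1, e2⟩ := h1
        obtain ⟨e3, e4⟩ := h2
        have hab : a = b := by omega
        have hBb : B v w = B a b := by rw [← e1, ← e2]
        have h2d : 2 ∣ B a b := by rw [← hab]; exact hdiag a
        rw [if_pos ⟨e1, e2⟩, if_pos ⟨e3, e4⟩]
        omega
      · have hBb : B v w = B a b := by rw [← h1.1, ← h1.2]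
        rw [if_pos h1, if_neg h2]
        omega
    · by_cases h2 : a = w ∧ b = v
      · have hBb : B v w = B a b := by rw [hsym]; rw [← h2.1, ← h2.2]
        rw [if_neg h1, if_pos h2]
        omega
      · rw [if_neg h1, if_neg h2]
        exact Nat.zero_le _
  simp only [stepER]
  split_ifs at hge ⊢ <;> omega

lemma sum_ind {n : ℕ} (c : Prop) [Decidable c] {x : ℕ} (hx : x < n) :
    ∑ j ∈ Finset.range n, (if c ∧ j = x then (1:ℤ) else 0) = if c then 1 else 0 := by
  by_cases hc : c <;> simp [hc, Finset.sum_ite_eq', hx]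

lemma degB_step_real {n : ℕ} {B : ℕ → ℕ → ℕ} (hB : IsAdjOn n B) {v w u : ℕ} (i : ℕ)
    (hv : v < n) (hw : w < n) (hu : u < n) (hvw : 1 ≤ B v w) :
    (degB n (stepER B v w u) i : ℝ) =
      (degB n B i : ℝ) - (if i = v then 1 else 0) + (if i = u then 1 else 0) := by
  have hZ : (degB n (stepER B v w u) i : ℤ) =
      (degB n B i : ℤ) - (if i = v then 1 else 0) + (if i = u then 1 else 0) := by
    have hc : ∀ j, (stepER B v w u i j : ℤ) = (B i j : ℤ) - (if i = v ∧ j = w then 1 else 0)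
        - (if i = w ∧ j = v then 1 else 0) + (if i = u ∧ j = w then 1 else 0)
        + (if i = w ∧ j = u then 1 else 0) := fun j => step_cast hB.1 hB.2.1 hvw u i j
    simp only [degB, Nat.cast_sum]
    rw [Finset.sum_congr rfl (fun j _ => hc j)]
    rw [Finset.sum_add_distrib, Finset.sum_add_distrib, Finset.sum_sub_distrib,
      Finset.sum_sub_distrib, sum_ind (i = v) hw, sum_ind (i = w) hv, sum_ind (i = u) hw,
      sum_ind (i = w) hu]
    ring
  have hR := congrArg (fun x : ℤ => (x : ℝ)) hZ
  push_cast at hR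
  rw [hR]



lemma degB_le {n m : ℕ} {B : ℕ → ℕ → ℕ} (hB : IsAdjOnM n m B) {a : ℕ} (ha : a < n) :
    degB n B a ≤ 2 * m := by
  calc degB n B a ≤ ∑ i ∈ Finset.range n, ∑ j ∈ Finset.range n, B i j :=
        Finset.single_le_sum (f := fun i => ∑ j ∈ Finset.range n, B i j)
          (fun _ _ => Nat.zero_le _) (Finset.mem_range.2 ha)
    _ = 2 * m := hB.2

lemma onestep {κ lam : ℝ} (hκ : 0 < κ) (hlam : 0 < lam) {n m : ℕ}
    (hn : 1 ≤ n) (hm : 1 ≤ m)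
    (hdrift : (Real.exp (lam / n) - 1) * (2 * m) ≤ n * κ)
    {B : ℕ → ℕ → ℕ} (hB : IsAdjOnM n m B) {i : ℕ} (hi : i < n) :
    ∑ B' ∈ SFin n m, transER κ n m B B' * Real.exp (lam * (degB n B' i) / n)
      ≤ Real.exp (lam / n * Real.exp (lam / n) * κ / (2 * m + n * κ))
        * Real.exp (lam * (degB n B i) / n) := by
  have hnR : (1:ℝ) ≤ (n:ℝ) := by exact_mod_cast hn
  have hmR : (1:ℝ) ≤ (m:ℝ) := by exact_mod_cast hm
  set s : ℝ := lam / n with hs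
  have hspos : 0 < s := div_pos hlam (by linarith)
  have h2m : (0:ℝ) < 2 * m := by linarith
  have hM : (0:ℝ) < 2 * m + n * κ := by nlinarith
  set E : ℝ := Real.exp (lam * (degB n B i) / n) with hE
  have hEpos : 0 < E := Real.exp_pos _
  -- step 1
  have step1 : ∑ B' ∈ SFin n m, transER κ n m B B' * Real.exp (lam * (degB n B' i) / n)
      = ∑ v ∈ Finset.range n, ∑ w ∈ Finset.range n, ∑ u ∈ Finset.range n,
          ((B v w : ℝ) / (2 * m)) * (((degB n B u : ℝ) + κ) / (2 * m + n * κ)) *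
            (if stepER B v w u ∈ SFin n m then
              Real.exp (lam * (degB n (stepER B v w u) i) / n) else 0) := by
    simp only [transER, Finset.sum_mul]
    rw [Finset.sum_comm]
    refine Finset.sum_congr rfl fun v _ => ?_
    rw [Finset.sum_comm]
    refine Finset.sum_congr rfl fun w _ => ?_
    rw [Finset.sum_comm]
    refine Finset.sum_congr rfl fun u _ => ?_
    simp only [mul_ite, ite_mul, mul_one, mul_zero, zero_mul, one_mul, Finset.sum_ite_eq',
      Finset.sum_ite_eq]
  rw [step1]
  -- step 2
  have step2 : ∑ v ∈ Finset.range n, ∑ w ∈ Finset.range n, ∑ u ∈ Finset.range n,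
      ((B v w : ℝ) / (2 * m)) * (((degB n B u : ℝ) + κ) / (2 * m + n * κ)) *
        (if stepER B v w u ∈ SFin n m then
          Real.exp (lam * (degB n (stepER B v w u) i) / n) else 0)
      ≤ ∑ v ∈ Finset.range n, ∑ w ∈ Finset.range n, ∑ u ∈ Finset.range n,
          (((B v w : ℝ) / (2 * m)) * (if i = v then Real.exp (-s) else 1) * E) *
            ((((degB n B u : ℝ) + κ) / (2 * m + n * κ)) * (if i = u then Real.exp s else 1)) := by
    refine Finset.sum_le_sum fun v hv => Finset.sum_le_sum fun w hw => Finset.sum_le_sum fun u hu => ?_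
    rw [Finset.mem_range] at hv hw hu
    have hq : (0:ℝ) ≤ ((degB n B u : ℝ) + κ) / (2 * m + n * κ) := by positivity
    by_cases hBvw : 1 ≤ B v w
    · have hdeg := degB_step_real hB.1 i hv hw hu hBvw
      have hgstep : Real.exp (lam * (degB n (stepER B v w u) i) / n)
          = E * (if i = v then Real.exp (-s) else 1) * (if i = u then Real.exp s else 1) := by
        have e1 : (if i = v then Real.exp (-s) else 1)
            = Real.exp (-(s * (if i = v then (1:ℝ) else 0))) := by split_ifs <;> simp
        have e2 : (if i = u then Real.exp s else 1)
            = Real.exp (s * (if i = u then (1:ℝ) else 0)) := by split_ifs <;> simp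
        have hn0 : (n:ℝ) ≠ 0 := by linarith
        rw [hdeg, hE, e1, e2, ← Real.exp_add, ← Real.exp_add]
        congr 1
        rw [hs]
        field_simp
        split_ifs <;> ring
      have hwt : (0:ℝ) ≤ ((B v w : ℝ) / (2 * m)) * (((degB n B u : ℝ) + κ) / (2 * m + n * κ)) := by
        positivity
      calc ((B v w : ℝ) / (2 * m)) * (((degB n B u : ℝ) + κ) / (2 * m + n * κ)) *
            (if stepER B v w u ∈ SFin n m then
              Real.exp (lam * (degB n (stepER B v w u) i) / n) else 0)
          ≤ ((B v w : ℝ) / (2 * m)) * (((degB n B u : ℝ) + κ) / (2 * m + n * κ)) *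
            Real.exp (lam * (degB n (stepER B v w u) i) / n) := by
            refine mul_le_mul_of_nonneg_left ?_ hwt
            split_ifs
            · exact le_rfl
            · positivity
        _ = (((B v w : ℝ) / (2 * m)) * (if i = v then Real.exp (-s) else 1) * E) *
            ((((degB n B u : ℝ) + κ) / (2 * m + n * κ)) * (if i = u then Real.exp s else 1)) := by
            rw [hgstep]; ring
    · have h0 : (B v w : ℝ) = 0 := by
        have : B v w = 0 := by omega
        exact_mod_cast this
      rw [h0]
      simp only [zero_div, zero_mul]
      have h1 : (0:ℝ) ≤ (if i = v then Real.exp (-s) else 1) := by split_ifs <;> positivity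
      have h2 : (0:ℝ) ≤ (if i = u then Real.exp s else 1) := by split_ifs <;> positivity
      positivity
  refine le_trans step2 ?_
  -- step 3 : factorize
  have hdegrow : ∀ v, ∑ w ∈ Finset.range n, (B v w : ℝ) = (degB n B v : ℝ) := by
    intro v; simp [degB]
  have step3 : ∑ v ∈ Finset.range n, ∑ w ∈ Finset.range n, ∑ u ∈ Finset.range n,
      (((B v w : ℝ) / (2 * m)) * (if i = v then Real.exp (-s) else 1) * E) *
        ((((degB n B u : ℝ) + κ) / (2 * m + n * κ)) * (if i = u then Real.exp s else 1))
      = ((∑ v ∈ Finset.range n, ((degB n B v : ℝ) / (2 * m)) * (if i = v then Real.exp (-s) else 1))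
        * (∑ u ∈ Finset.range n, (((degB n B u : ℝ) + κ) / (2 * m + n * κ)) *
            (if i = u then Real.exp s else 1))) * E := by
    calc ∑ v ∈ Finset.range n, ∑ w ∈ Finset.range n, ∑ u ∈ Finset.range n,
        (((B v w : ℝ) / (2 * m)) * (if i = v then Real.exp (-s) else 1) * E) *
          ((((degB n B u : ℝ) + κ) / (2 * m + n * κ)) * (if i = u then Real.exp s else 1))
        = ∑ v ∈ Finset.range n, ∑ w ∈ Finset.range n,
            (((B v w : ℝ) / (2 * m)) * (if i = v then Real.exp (-s) else 1) * E) *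
              (∑ u ∈ Finset.range n, (((degB n B u : ℝ) + κ) / (2 * m + n * κ)) *
                (if i = u then Real.exp s else 1)) := by
          refine Finset.sum_congr rfl fun v _ => Finset.sum_congr rfl fun w _ => ?_
          rw [← Finset.mul_sum]
      _ = ∑ v ∈ Finset.range n,
            (((degB n B v : ℝ) / (2 * m)) * (if i = v then Real.exp (-s) else 1) * E) *
              (∑ u ∈ Finset.range n, (((degB n B u : ℝ) + κ) / (2 * m + n * κ)) *
                (if i = u then Real.exp s else 1)) := by
          refine Finset.sum_congr rfl fun v _ => ?_
          rw [← Finset.sum_mul, ← Finset.sum_mul, ← Finset.sum_mul, ← Finset.sum_div, hdegrow]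
      _ = _ := by
          rw [Finset.sum_mul, Finset.sum_mul]
          exact Finset.sum_congr rfl fun v _ => by ring
  rw [step3]
  -- step 4 : compute factors
  have hsumdeg : ∑ v ∈ Finset.range n, (degB n B v : ℝ) = 2 * m := by
    have hN : ∑ v ∈ Finset.range n, degB n B v = 2 * m := hB.2
    exact_mod_cast hN
  set d : ℝ := (degB n B i : ℝ) with hd
  have hd0 : 0 ≤ d := by positivity
  have hd2m : d ≤ 2 * m := by
    have := degB_le hB hi
    rw [hd]; exact_mod_cast this
  have factA : ∑ v ∈ Finset.range n, ((degB n B v : ℝ) / (2 * m)) *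
      (if i = v then Real.exp (-s) else 1) = 1 + (Real.exp (-s) - 1) * (d / (2 * m)) := by
    have hsplit : ∀ v, ((degB n B v : ℝ) / (2 * m)) * (if i = v then Real.exp (-s) else 1)
        = (degB n B v : ℝ) / (2 * m) +
          (if i = v then (Real.exp (-s) - 1) * ((degB n B v : ℝ) / (2 * m)) else 0) := by
      intro v; split_ifs <;> ring
    rw [Finset.sum_congr rfl fun v _ => hsplit v, Finset.sum_add_distrib,
      Finset.sum_ite_eq _ i _, if_pos (Finset.mem_range.2 hi), ← Finset.sum_div, hsumdeg]
    rw [div_self (ne_of_gt h2m)]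
  have factB : ∑ u ∈ Finset.range n, (((degB n B u : ℝ) + κ) / (2 * m + n * κ)) *
      (if i = u then Real.exp s else 1) = 1 + (Real.exp s - 1) * ((d + κ) / (2 * m + n * κ)) := by
    have hsplit : ∀ u, (((degB n B u : ℝ) + κ) / (2 * m + n * κ)) * (if i = u then Real.exp s else 1)
        = ((degB n B u : ℝ) + κ) / (2 * m + n * κ) +
          (if i = u then (Real.exp s - 1) * (((degB n B u : ℝ) + κ) / (2 * m + n * κ)) else 0) := by
      intro u; split_ifs <;> ring
    rw [Finset.sum_congr rfl fun u _ => hsplit u, Finset.sum_add_distrib,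
      Finset.sum_ite_eq _ i _, if_pos (Finset.mem_range.2 hi), ← Finset.sum_div,
      Finset.sum_add_distrib, hsumdeg, Finset.sum_const, Finset.card_range, nsmul_eq_mul]
    rw [div_self (ne_of_gt (by nlinarith : (0:ℝ) < 2 * m + n * κ))]
  rw [factA, factB]
  -- step 5 : numeric inequality
  have hkey : (1 + (Real.exp (-s) - 1) * (d / (2 * m))) *
      (1 + (Real.exp s - 1) * ((d + κ) / (2 * m + n * κ)))
      ≤ Real.exp (s * Real.exp s * κ / (2 * m + n * κ)) := by
    set A1 : ℝ := (Real.exp (-s) - 1) * (d / (2 * m)) with hA1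
    set B1 : ℝ := (Real.exp s - 1) * ((d + κ) / (2 * m + n * κ)) with hB1
    have hes1 : 1 ≤ Real.exp s := by
      rw [← Real.exp_zero]; exact Real.exp_le_exp.2 hspos.le
    have hesneg : Real.exp (-s) ≤ 1 := by
      rw [← Real.exp_zero]; exact Real.exp_le_exp.2 (by linarith)
    have hexpid : Real.exp s - 1 = Real.exp s * (1 - Real.exp (-s)) := by
      rw [mul_sub, ← Real.exp_add]; simp
    have hsexps : Real.exp s - 1 ≤ s * Real.exp s := by
      have h1 : 1 - s ≤ Real.exp (-s) := by
        have := Real.add_one_le_exp (-s); linarith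
      nlinarith [Real.exp_pos s]
    have hA1np : A1 ≤ 0 := mul_nonpos_of_nonpos_of_nonneg (by linarith) (by positivity)
    have hB1nn : 0 ≤ B1 := mul_nonneg (by linarith) (by positivity)
    have hprod : A1 * B1 ≤ 0 := mul_nonpos_of_nonpos_of_nonneg hA1np hB1nn
    have hdM : 2 * (m:ℝ) * Real.exp s ≤ 2 * m + n * κ := by nlinarith
    have hdivle : Real.exp s / (2 * m + n * κ) ≤ 1 / (2 * m) := by
      rw [div_le_div_iff₀ hM h2m]; nlinarith
    have hkey1 : (Real.exp s - 1) * (d / (2 * m + n * κ)) ≤ (1 - Real.exp (-s)) * (d / (2 * m)) := by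
      rw [hexpid]
      have h1 : Real.exp s * (1 - Real.exp (-s)) * (d / (2 * m + n * κ))
          = (1 - Real.exp (-s)) * d * (Real.exp s / (2 * m + n * κ)) := by ring
      have h2 : (1 - Real.exp (-s)) * (d / (2 * m)) = (1 - Real.exp (-s)) * d * (1 / (2 * m)) := by
        ring
      rw [h1, h2]
      exact mul_le_mul_of_nonneg_left hdivle (by nlinarith)
    have hkey2 : (Real.exp s - 1) * (κ / (2 * m + n * κ)) ≤ s * Real.exp s * κ / (2 * m + n * κ) := by
      have hκM : (0:ℝ) ≤ κ / (2 * m + n * κ) := by positivity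
      calc (Real.exp s - 1) * (κ / (2 * m + n * κ))
          ≤ (s * Real.exp s) * (κ / (2 * m + n * κ)) := mul_le_mul_of_nonneg_right hsexps hκM
        _ = s * Real.exp s * κ / (2 * m + n * κ) := by ring
    have hexpand : (1 + A1) * (1 + B1) = 1 + A1 + B1 + A1 * B1 := by ring
    have hB1split : B1 = (Real.exp s - 1) * (d / (2 * m + n * κ))
        + (Real.exp s - 1) * (κ / (2 * m + n * κ)) := by rw [hB1]; ring
    have hA1eq : (1 - Real.exp (-s)) * (d / (2 * m)) = -A1 := by rw [hA1]; ring
    have hfin : (1 + A1) * (1 + B1) ≤ 1 + s * Real.exp s * κ / (2 * m + n * κ) := by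
      rw [hexpand]
      have h3 := hkey1
      rw [hA1eq] at h3
      linarith
    refine hfin.trans ?_
    have h4 := Real.add_one_le_exp (s * Real.exp s * κ / (2 * m + n * κ))
    linarith
  calc (1 + (Real.exp (-s) - 1) * (d / (2 * m))) *
        (1 + (Real.exp s - 1) * ((d + κ) / (2 * m + n * κ))) * E
      ≤ Real.exp (s * Real.exp s * κ / (2 * m + n * κ)) * E :=
        mul_le_mul_of_nonneg_right hkey hEpos.le
    _ = Real.exp (lam / n * Real.exp (lam / n) * κ / (2 * m + n * κ)) * E := by rw [hs]



lemma transER_nonneg {κ : ℝ} (hκ : 0 ≤ κ) (n m : ℕ) (B B' : ℕ → ℕ → ℕ) :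
    0 ≤ transER κ n m B B' := by
  refine Finset.sum_nonneg fun v _ => Finset.sum_nonneg fun w _ => Finset.sum_nonneg fun u _ => ?_
  have h1 : (0:ℝ) ≤ (B v w : ℝ) / (2 * m) := by positivity
  have h2 : (0:ℝ) ≤ ((degB n B u : ℝ) + κ) / (2 * m + n * κ) := by
    have hnum : (0:ℝ) ≤ (degB n B u : ℝ) + κ := by positivity
    have hden : (0:ℝ) ≤ 2 * (m:ℝ) + n * κ := by positivity
    exact div_nonneg hnum hden
  have h3 : (0:ℝ) ≤ (if B' = stepER B v w u then (1:ℝ) else 0) := by split_ifs <;> norm_num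
  exact mul_nonneg (mul_nonneg h1 h2) h3

lemma amgm {n : ℕ} (hn : 1 ≤ n) (lam : ℝ) (x : ℕ → ℕ) :
    Real.exp (lam * ((∑ j ∈ Finset.range n, x j : ℕ) : ℝ) / n)
      ≤ (1 / n) * ∑ j ∈ Finset.range n, Real.exp (lam * x j) := by
  have hnR : (1:ℝ) ≤ (n:ℝ) := by exact_mod_cast hn
  have hn0 : (n:ℝ) ≠ 0 := by linarith
  have h := Real.geom_mean_le_arith_mean_weighted (Finset.range n) (fun _ => 1 / (n:ℝ))
    (fun j => Real.exp (lam * x j)) (fun _ _ => by positivity)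
    (by rw [Finset.sum_const, Finset.card_range, nsmul_eq_mul]; field_simp)
    (fun _ _ => (Real.exp_pos _).le)
  have hL : ∏ j ∈ Finset.range n, (Real.exp (lam * (x j : ℝ))) ^ ((1:ℝ) / n)
      = Real.exp (lam * ((∑ j ∈ Finset.range n, x j : ℕ) : ℝ) / n) := by
    have hterm : ∀ j, (Real.exp (lam * (x j : ℝ))) ^ ((1:ℝ) / n)
        = Real.exp (lam * (x j : ℝ) * (1 / n)) := by
      intro j
      rw [Real.rpow_def_of_pos (Real.exp_pos _), Real.log_exp]
    rw [Finset.prod_congr rfl fun j _ => hterm j, ← Real.exp_sum]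
    congr 1
    push_cast
    rw [← Finset.sum_mul, ← Finset.mul_sum]
    ring
  refine le_trans (le_of_eq hL.symm) (le_trans h (le_of_eq ?_))
  rw [Finset.mul_sum]

end ERaux

/-- Lemma 4.1 (i): exponential tail bound for the maximal normalized degree. -/
theorem degree_exponential_tail
    (κ ρ : ℝ) (hκ : 0 < κ) (hρ : 0 < ρ)
    (Ω : ℕ → Type) [∀ n, MeasurableSpace (Ω n)]
    (μ : ∀ n, Measure (Ω n)) (hprob : ∀ n, IsProbabilityMeasure (μ n))
    (m : ℕ → ℕ) (X : ∀ n, ℕ → Ω n → ℕ → ℕ → ℕ)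
    (hER : ∀ n, IsEdgeReconnecting κ (μ n) n (m n) (X n))
    (hexch : ∀ n, VertexExchangeable (μ n) n (X n 0))
    (hm : Tendsto (fun n => (2 * (m n : ℝ)) / (n : ℝ) ^ 2) atTop (𝓝 ρ))
    (lam C : ℝ) (hlam : 0 < lam) (hlamκρ : lam < κ / ρ)
    (hmom : ∀ n, ∀ i < n, ∀ j < n,
      ∫⁻ ω, ENNReal.ofReal (Real.exp (lam * (X n 0 ω i j : ℝ))) ∂(μ n) ≤ ENNReal.ofReal C) :
    ∃ n' : ℕ, ∀ t z : ℝ, 0 ≤ t → 0 ≤ z → ∀ n, n' ≤ n → ∀ i < n,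
      μ n {ω | ∃ T : ℕ, (T : ℝ) ≤ 2 * (m n : ℝ) * (n : ℝ) * t ∧
          z ≤ (degB n (X n T ω) i : ℝ) / (n : ℝ)}
        ≤ ENNReal.ofReal (C * Real.exp (2 * lam * κ * t) * Real.exp (-(lam * z))) := by
  classical
  -- Step A: choice of n'
  have hlrho : lam * ρ < κ := (lt_div_iff₀ hρ).1 hlamκρ
  have hev1 : ∀ᶠ n : ℕ in atTop, ρ / 2 < 2 * (m n : ℝ) / (n:ℝ)^2 :=
    hm.eventually (eventually_gt_nhds (by linarith))
  have hdiv0 : Tendsto (fun n : ℕ => lam / (n:ℝ)) atTop (𝓝 0) :=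
    tendsto_const_div_atTop_nhds_zero_nat lam
  have hexp1 : Tendsto (fun n : ℕ => Real.exp (lam / (n:ℝ))) atTop (𝓝 1) := by
    have h := (Real.continuous_exp.tendsto 0).comp hdiv0
    simpa [Function.comp_def] using h
  have hev2 : ∀ᶠ n : ℕ in atTop,
      lam * Real.exp (lam / (n:ℝ)) * (2 * (m n : ℝ) / (n:ℝ)^2) < κ := by
    have h2 : Tendsto (fun n : ℕ => lam * Real.exp (lam / (n:ℝ)) * (2 * (m n : ℝ) / (n:ℝ)^2))
        atTop (𝓝 (lam * 1 * ρ)) := (tendsto_const_nhds.mul hexp1).mul hm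
    exact h2.eventually (eventually_lt_nhds (by rw [mul_one]; exact hlrho))
  have hev3 : ∀ᶠ n : ℕ in atTop, Real.exp (lam / (n:ℝ)) ≤ 2 :=
    hexp1.eventually (eventually_le_nhds (by norm_num))
  have hev4 : ∀ᶠ n : ℕ in atTop, 1 ≤ n := eventually_ge_atTop 1
  obtain ⟨n', hcond⟩ := eventually_atTop.1 (((hev1.and hev2).and hev3).and hev4)
  refine ⟨n', ?_⟩
  intro t z ht hz n hn i hi
  obtain ⟨⟨⟨hc1, hc2⟩, hc3⟩, hc4⟩ := hcond n hn
  have hn0 : (0:ℝ) < (n:ℝ) := by exact_mod_cast hc4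
  have hm1 : 1 ≤ m n := by
    by_contra hcon
    have hz0 : m n = 0 := by omega
    rw [hz0] at hc1
    norm_num at hc1
    linarith
  have hmR : (1:ℝ) ≤ (m n : ℝ) := by exact_mod_cast hm1
  have hdrift : (Real.exp (lam / (n:ℝ)) - 1) * (2 * (m n : ℝ)) ≤ (n:ℝ) * κ := by
    have hprodexp : Real.exp (-(lam/(n:ℝ))) * Real.exp (lam/(n:ℝ)) = 1 := by
      rw [← Real.exp_add]; simp
    have hse : Real.exp (lam / (n:ℝ)) - 1 ≤ (lam / n) * Real.exp (lam / n) := by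
      have h1 := Real.add_one_le_exp (-(lam / (n:ℝ)))
      nlinarith [Real.exp_pos (lam / (n:ℝ)), (by positivity : (0:ℝ) ≤ lam / n)]
    have h3 : (lam/(n:ℝ)) * Real.exp (lam / n) * (2 * (m n : ℝ))
        = lam * Real.exp (lam / n) * (2 * (m n : ℝ) / (n:ℝ)^2) * n := by
      field_simp
    have h4 : lam * Real.exp (lam / (n:ℝ)) * (2 * (m n : ℝ) / (n:ℝ)^2) * n ≤ κ * n :=
      mul_le_mul_of_nonneg_right hc2.le hn0.le
    have h5 : (Real.exp (lam / (n:ℝ)) - 1) * (2 * (m n:ℝ))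
        ≤ (lam/(n:ℝ)) * Real.exp (lam / n) * (2 * (m n:ℝ)) :=
      mul_le_mul_of_nonneg_right hse (by positivity)
    nlinarith
  have hprobn := hprob n
  have hC1 : (1:ℝ) ≤ C := by
    have h2 := hmom n i hi i hi
    have h3 : (1:ℝ≥0∞) ≤ ∫⁻ ω, ENNReal.ofReal (Real.exp (lam * (X n 0 ω i i : ℝ))) ∂ μ n := by
      have hpt : ∀ ω, (1:ℝ≥0∞) ≤ ENNReal.ofReal (Real.exp (lam * (X n 0 ω i i : ℝ))) := fun ω =>
        ENNReal.one_le_ofReal.2 (Real.one_le_exp (by positivity))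
      calc (1:ℝ≥0∞) = ∫⁻ _, 1 ∂ μ n := by simp
        _ ≤ _ := lintegral_mono hpt
    exact ENNReal.one_le_ofReal.1 (h3.trans h2)
  have hC0 : (0:ℝ) ≤ C := by linarith
  -- notation
  set mm := m n with hmm
  set N := Nat.floor (2 * (mm:ℝ) * n * t) with hNdef
  have hMpos : (0:ℝ) < 2 * mm + n * κ := by nlinarith
  obtain ⟨cc, hcc⟩ : ∃ cc : ℝ,
      cc = lam / (n:ℝ) * Real.exp (lam / (n:ℝ)) * κ / (2 * mm + n * κ) := ⟨_, rfl⟩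
  have hcc0 : 0 ≤ cc := by
    rw [hcc]
    have h1 : (0:ℝ) ≤ lam / (n:ℝ) * Real.exp (lam / (n:ℝ)) * κ := by positivity
    exact div_nonneg h1 hMpos.le
  obtain ⟨aE, haE⟩ : ∃ aE : ℝ≥0∞, aE = ENNReal.ofReal (Real.exp cc) := ⟨_, rfl⟩
  have ha1 : (1:ℝ≥0∞) ≤ aE := by
    rw [haE]; exact ENNReal.one_le_ofReal.2 (Real.one_le_exp hcc0)
  obtain ⟨g, hg⟩ : ∃ g : (ℕ → ℕ → ℕ) → ℝ≥0∞,
      g = fun Bq => ENNReal.ofReal (Real.exp (lam * (degB n Bq i : ℝ) / n)) := ⟨_, rfl⟩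
  obtain ⟨cyl, hcyl⟩ : ∃ cyl : ℕ → (ℕ → ℕ → ℕ → ℕ) → Set (Ω n),
      cyl = fun T p => {ω | ∀ S ≤ T, X n S ω = p S} := ⟨_, rfl⟩
  obtain ⟨aliveP, halive⟩ : ∃ aliveP : ℕ → (ℕ → ℕ → ℕ → ℕ) → Prop,
      aliveP = fun T p => ∀ S ≤ T, (degB n (p S) i : ℝ) < z * n := ⟨_, rfl⟩
  obtain ⟨badP, hbad⟩ : ∃ badP : ℕ → (ℕ → ℕ → ℕ → ℕ) → Prop,
      badP = fun T p => (∀ S < T, (degB n (p S) i : ℝ) < z * n)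
        ∧ z * n ≤ (degB n (p T) i : ℝ) := ⟨_, rfl⟩
  obtain ⟨Phi, hPhi⟩ : ∃ Phi : ℕ → ℝ≥0∞,
      Phi = fun T => ∑ p ∈ (ERaux.Path n mm T).filter (aliveP T),
        μ n (cyl T p) * g (p T) := ⟨_, rfl⟩
  obtain ⟨Dd, hDd⟩ : ∃ Dd : ℕ → ℝ≥0∞,
      Dd = fun T => ∑ p ∈ (ERaux.Path n mm T).filter (badP T),
        μ n (cyl T p) * g (p T) := ⟨_, rfl⟩
  -- Markov property in cylinder form
  have hMarkov : ∀ (T : ℕ) (p : ℕ → ℕ → ℕ → ℕ) (B' : ℕ → ℕ → ℕ),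
      μ n (cyl (T+1) (ERaux.ext (T+1) p B'))
        = μ n (cyl T p) * ENNReal.ofReal (transER κ n mm (p T) B') := by
    intro T p B'
    have hset : cyl (T+1) (ERaux.ext (T+1) p B')
        = {ω | (∀ S ≤ T, X n S ω = p S) ∧ X n (T+1) ω = B'} := by
      simp only [hcyl]
      ext ω
      simp only [mem_setOf_eq]
      constructor
      · intro h
        refine ⟨fun S hS => ?_, ?_⟩
        · have h1 := h S (by omega)
          rwa [ERaux.ext_apply, if_neg (by omega : ¬ S = T + 1)] at h1
        · have h1 := h (T+1) le_rfl
          rwa [ERaux.ext_apply, if_pos rfl] at h1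
      · rintro ⟨h1, h2⟩ S hS
        by_cases hST : S = T + 1
        · subst hST; rw [ERaux.ext_apply, if_pos rfl]; exact h2
        · rw [ERaux.ext_apply, if_neg hST]; exact h1 S (by omega)
    rw [hset, hmm]
    simp only [hcyl]
    exact (hER n).2.2 T p B'
  -- one-step bound, ENNReal form
  have honestep : ∀ (Bq : ℕ → ℕ → ℕ), IsAdjOnM n mm Bq →
      ∑ B' ∈ ERaux.SFin n mm, ENNReal.ofReal (transER κ n mm Bq B') * g B' ≤ aE * g Bq := by
    intro Bq hBq
    have h1 : ∀ B' ∈ ERaux.SFin n mm, ENNReal.ofReal (transER κ n mm Bq B') * g B'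
        = ENNReal.ofReal (transER κ n mm Bq B' * Real.exp (lam * (degB n B' i : ℝ) / n)) := by
      intro B' _
      simp only [hg]
      exact (ENNReal.ofReal_mul (ERaux.transER_nonneg hκ.le n mm Bq B')).symm
    rw [Finset.sum_congr rfl h1, ← ENNReal.ofReal_sum_of_nonneg (fun B' _ =>
      mul_nonneg (ERaux.transER_nonneg hκ.le n mm Bq B') (Real.exp_pos _).le)]
    have h2 := ERaux.onestep hκ hlam hc4 hm1 hdrift hBq hi
    refine le_trans (ENNReal.ofReal_le_ofReal h2) ?_
    rw [ENNReal.ofReal_mul (Real.exp_pos _).le, haE, hcc, hg]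
  -- covering a cylinder by its one-step extensions
  have hcover : ∀ (T : ℕ) (p : ℕ → ℕ → ℕ → ℕ),
      μ n (cyl T p) ≤ ∑ B' ∈ ERaux.SFin n mm, μ n (cyl (T+1) (ERaux.ext (T+1) p B')) := by
    intro T p
    have hsub : cyl T p ⊆ ⋃ B' ∈ ERaux.SFin n mm, cyl (T+1) (ERaux.ext (T+1) p B') := by
      simp only [hcyl]
      intro ω hω
      simp only [mem_setOf_eq] at hω
      refine Set.mem_biUnion (ERaux.mem_SFin ((hER n).2.1 (T+1) ω)) ?_
      simp only [mem_setOf_eq]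
      intro S hS
      by_cases hST : S = T + 1
      · subst hST; rw [ERaux.ext_apply, if_pos rfl]
      · rw [ERaux.ext_apply, if_neg hST]; exact hω S (by omega)
    exact (measure_mono hsub).trans (measure_biUnion_finset_le _ _)
  -- prop splits
  have hiff1 : ∀ (T : ℕ) p, aliveP (T+1) p ↔ aliveP T p ∧ (degB n (p (T+1)) i : ℝ) < z * n := by
    intro T p
    simp only [halive]
    constructor
    · intro h; exact ⟨fun S hS => h S (by omega), h (T+1) le_rfl⟩
    · rintro ⟨h, h'⟩ S hS
      by_cases hST : S = T + 1
      · subst hST; exact h'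
      · exact h S (by omega)
  have hiff2 : ∀ (T : ℕ) p, badP (T+1) p ↔ aliveP T p ∧ ¬ ((degB n (p (T+1)) i : ℝ) < z * n) := by
    intro T p
    simp only [hbad, halive]
    constructor
    · rintro ⟨h, h'⟩
      exact ⟨fun S hS => h S (by omega), not_lt.2 h'⟩
    · rintro ⟨h, h'⟩
      exact ⟨fun S hS => h S (by omega), not_lt.1 h'⟩
  -- recursion step
  have hrec : ∀ T : ℕ, Phi (T+1) + Dd (T+1) ≤ aE * Phi T := by
    intro T
    have hPD : Phi (T+1) + Dd (T+1)
        = ∑ p ∈ (ERaux.Path n mm (T+1)).filter (fun p => aliveP T p),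
            μ n (cyl (T+1) p) * g (p (T+1)) := by
      simp only [hPhi, hDd]
      rw [Finset.sum_filter, Finset.sum_filter, Finset.sum_filter, ← Finset.sum_add_distrib]
      refine Finset.sum_congr rfl fun p _ => ?_
      by_cases hA : aliveP T p <;> by_cases hB : (degB n (p (T+1)) i : ℝ) < z * n <;>
        simp [hiff1 T p, hiff2 T p, hA, hB]
    rw [hPD]
    have hinj : ∀ x ∈ (ERaux.Path n mm T) ×ˢ (ERaux.SFin n mm),
        ∀ y ∈ (ERaux.Path n mm T) ×ˢ (ERaux.SFin n mm),
        ERaux.ext (T+1) x.1 x.2 = ERaux.ext (T+1) y.1 y.2 → x = y := by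
      intro x hx y hy h
      have hx1 := (Finset.mem_product.1 hx).1
      have hy1 := (Finset.mem_product.1 hy).1
      have h2 : x.2 = y.2 := by
        have h3 := congrFun h (T+1)
        rwa [ERaux.ext_apply, ERaux.ext_apply, if_pos rfl, if_pos rfl] at h3
      have h1 : x.1 = y.1 := by
        funext S
        by_cases hST : S = T + 1
        · subst hST
          rw [ERaux.Path_eq_zero hx1 (T+1) (by omega), ERaux.Path_eq_zero hy1 (T+1) (by omega)]
        · have h3 := congrFun h S
          rwa [ERaux.ext_apply, ERaux.ext_apply, if_neg hST, if_neg hST] at h3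
      exact Prod.ext h1 h2
    have hextlow : ∀ (q : ℕ → ℕ → ℕ → ℕ) (B' : ℕ → ℕ → ℕ) (S : ℕ), S ≤ T →
        ERaux.ext (T+1) q B' S = q S := by
      intro q B' S hS
      rw [ERaux.ext_apply, if_neg (by omega : ¬ S = T + 1)]
    have halive_ext : ∀ (q : ℕ → ℕ → ℕ → ℕ) (B' : ℕ → ℕ → ℕ),
        aliveP T (ERaux.ext (T+1) q B') ↔ aliveP T q := by
      intro q B'
      simp only [halive]
      constructor
      · intro h S hS; have := h S hS; rwa [hextlow q B' S hS] at this
      · intro h S hS; rw [hextlow q B' S hS]; exact h S hS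
    have hre : ∑ p ∈ (ERaux.Path n mm (T+1)).filter (fun p => aliveP T p),
          μ n (cyl (T+1) p) * g (p (T+1))
        = ∑ q ∈ (ERaux.Path n mm T).filter (aliveP T), ∑ B' ∈ ERaux.SFin n mm,
            μ n (cyl (T+1) (ERaux.ext (T+1) q B')) * g B' := by
      rw [Finset.sum_filter]
      have hP1 : ERaux.Path n mm (T+1)
          = ((ERaux.Path n mm T) ×ˢ (ERaux.SFin n mm)).image
              (fun x => ERaux.ext (T+1) x.1 x.2) := rfl
      rw [hP1, Finset.sum_image hinj, Finset.sum_product]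
      rw [Finset.sum_filter]
      refine Finset.sum_congr rfl fun q hq => ?_
      have hext_top : ∀ B' : ℕ → ℕ → ℕ, ERaux.ext (T+1) q B' (T+1) = B' := by
        intro B'; rw [ERaux.ext_apply, if_pos rfl]
      by_cases hA : aliveP T q
      · rw [if_pos hA]
        refine Finset.sum_congr rfl fun B' _ => ?_
        rw [if_pos ((halive_ext q B').2 hA), hext_top B']
      · rw [if_neg hA]
        exact Finset.sum_eq_zero fun B' _ => by
          rw [if_neg (fun hcon => hA ((halive_ext q B').1 hcon))]
    rw [hre]
    have hper : ∀ q ∈ (ERaux.Path n mm T).filter (aliveP T),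
        ∑ B' ∈ ERaux.SFin n mm, μ n (cyl (T+1) (ERaux.ext (T+1) q B')) * g B'
          ≤ aE * (μ n (cyl T q) * g (q T)) := by
      intro q hq
      have hstep : ∑ B' ∈ ERaux.SFin n mm, μ n (cyl (T+1) (ERaux.ext (T+1) q B')) * g B'
          = μ n (cyl T q) * ∑ B' ∈ ERaux.SFin n mm,
              ENNReal.ofReal (transER κ n mm (q T) B') * g B' := by
        rw [Finset.mul_sum]
        refine Finset.sum_congr rfl fun B' _ => ?_
        rw [hMarkov T q B', mul_assoc]
      rw [hstep]
      rcases eq_or_ne (μ n (cyl T q)) 0 with h0 | h0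
      · simp [h0]
      · have hne : (cyl T q).Nonempty := nonempty_of_measure_ne_zero h0
        obtain ⟨ω, hω⟩ := hne
        simp only [hcyl, mem_setOf_eq] at hω
        have hqT : q T = X n T ω := (hω T le_rfl).symm
        have hAdj : IsAdjOnM n mm (q T) := by rw [hqT]; exact (hER n).2.1 T ω
        calc μ n (cyl T q) * ∑ B' ∈ ERaux.SFin n mm,
              ENNReal.ofReal (transER κ n mm (q T) B') * g B'
            ≤ μ n (cyl T q) * (aE * g (q T)) := mul_le_mul_right (honestep (q T) hAdj) _
          _ = aE * (μ n (cyl T q) * g (q T)) := by ring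
    calc ∑ q ∈ (ERaux.Path n mm T).filter (aliveP T), ∑ B' ∈ ERaux.SFin n mm,
          μ n (cyl (T+1) (ERaux.ext (T+1) q B')) * g B'
        ≤ ∑ q ∈ (ERaux.Path n mm T).filter (aliveP T), aE * (μ n (cyl T q) * g (q T)) :=
          Finset.sum_le_sum hper
      _ = aE * Phi T := by simp only [hPhi]; rw [Finset.mul_sum]
  -- base case
  have hmeasE : ∀ Bq : ℕ → ℕ → ℕ, MeasurableSet {ω | X n 0 ω = Bq} := by
    intro Bq
    have hset : {ω | X n 0 ω = Bq} = ⋂ (a : ℕ), ⋂ (b : ℕ), {ω | X n 0 ω a b = Bq a b} := by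
      ext ω
      simp only [mem_setOf_eq, Set.mem_iInter]
      constructor
      · intro h a b; rw [h]
      · intro h; funext a b; exact h a b
    rw [hset]
    exact MeasurableSet.iInter fun a => MeasurableSet.iInter fun b =>
      ((hER n).1 0 a b) (measurableSet_singleton _)
  have hbase : Phi 0 + Dd 0 ≤ ENNReal.ofReal C := by
    have hPD0 : Phi 0 + Dd 0 = ∑ p ∈ ERaux.Path n mm 0, μ n (cyl 0 p) * g (p 0) := by
      simp only [hPhi, hDd]
      rw [Finset.sum_filter, Finset.sum_filter, ← Finset.sum_add_distrib]
      refine Finset.sum_congr rfl fun p _ => ?_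
      have h1 : aliveP 0 p ↔ (degB n (p 0) i : ℝ) < z * n := by
        simp only [halive]
        exact ⟨fun h => h 0 le_rfl, fun h S hS => by rw [Nat.le_zero.1 hS]; exact h⟩
      have h2 : badP 0 p ↔ ¬ ((degB n (p 0) i : ℝ) < z * n) := by
        simp only [hbad]
        exact ⟨fun h => not_lt.2 h.2, fun h => ⟨fun S hS => absurd hS (Nat.not_lt_zero S),
          not_lt.1 h⟩⟩
      by_cases hB : (degB n (p 0) i : ℝ) < z * n <;> simp [h1, h2, hB]
    rw [hPD0]
    have hinj0 : ∀ x ∈ ERaux.SFin n mm, ∀ y ∈ ERaux.SFin n mm,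
        (fun S => if S = 0 then x else fun _ _ => (0:ℕ))
          = (fun S => if S = 0 then y else fun _ _ => (0:ℕ)) → x = y := by
      intro x _ y _ h
      have := congrFun h 0
      simpa using this
    have hP0 : ERaux.Path n mm 0
        = (ERaux.SFin n mm).image (fun B S => if S = 0 then B else fun _ _ => 0) := rfl
    rw [hP0, Finset.sum_image hinj0]
    have hterm : ∀ Bq ∈ ERaux.SFin n mm,
        μ n (cyl 0 (fun S => if S = 0 then Bq else fun _ _ => 0))
          * g ((fun S => if S = 0 then Bq else fun _ _ => 0) 0)
        = ∫⁻ ω in {ω | X n 0 ω = Bq}, g (X n 0 ω) ∂ μ n := by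
      intro Bq _
      have hcylE : cyl 0 (fun S => if S = 0 then Bq else fun _ _ => 0)
          = {ω | X n 0 ω = Bq} := by
        simp only [hcyl]
        ext ω
        simp only [mem_setOf_eq]
        constructor
        · intro h
          have := h 0 le_rfl
          simpa using this
        · intro h S hS
          rw [Nat.le_zero.1 hS]
          simpa using h
      have h1 : ∫⁻ ω in {ω | X n 0 ω = Bq}, g (X n 0 ω) ∂ μ n
          = ∫⁻ _ω in {ω | X n 0 ω = Bq}, g Bq ∂ μ n := by
        refine setLIntegral_congr_fun (hmeasE Bq) (fun ω hω => ?_)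
        rw [hω]
      have hp0 : (fun S => if S = 0 then Bq else fun _ _ => 0) 0 = Bq := by simp
      rw [hp0, hcylE, h1, setLIntegral_const, mul_comm]
    rw [Finset.sum_congr rfl hterm]
    have hdisj : Set.PairwiseDisjoint (↑(ERaux.SFin n mm))
        (fun Bq : ℕ → ℕ → ℕ => {ω | X n 0 ω = Bq}) := by
      intro x _ y _ hxy
      refine Set.disjoint_left.2 fun ω hx hy => hxy ?_
      rw [← hx, ← hy]
    calc ∑ Bq ∈ ERaux.SFin n mm, ∫⁻ ω in {ω | X n 0 ω = Bq}, g (X n 0 ω) ∂ μ n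
        = ∫⁻ ω in ⋃ Bq ∈ ERaux.SFin n mm, {ω | X n 0 ω = Bq}, g (X n 0 ω) ∂ μ n :=
          (lintegral_biUnion_finset hdisj (fun Bq _ => hmeasE Bq) _).symm
      _ ≤ ∫⁻ ω, g (X n 0 ω) ∂ μ n := setLIntegral_le_lintegral _ _
      _ ≤ ENNReal.ofReal C := ?_
    have hpt : ∀ ω, g (X n 0 ω) ≤ ∑ j ∈ Finset.range n,
        ENNReal.ofReal ((1/(n:ℝ)) * Real.exp (lam * (X n 0 ω i j : ℝ))) := by
      intro ω
      simp only [hg]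
      have h1 := ERaux.amgm hc4 lam (fun j => X n 0 ω i j)
      calc ENNReal.ofReal (Real.exp (lam * (degB n (X n 0 ω) i : ℝ) / n))
          ≤ ENNReal.ofReal ((1/(n:ℝ))
              * ∑ j ∈ Finset.range n, Real.exp (lam * (X n 0 ω i j : ℝ))) := by
            refine ENNReal.ofReal_le_ofReal ?_
            simpa [degB] using h1
        _ = ∑ j ∈ Finset.range n,
              ENNReal.ofReal ((1/(n:ℝ)) * Real.exp (lam * (X n 0 ω i j : ℝ))) := by
            rw [Finset.mul_sum, ENNReal.ofReal_sum_of_nonneg (fun j _ => by positivity)]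
    have hmeasj : ∀ j : ℕ, Measurable fun ω =>
        ENNReal.ofReal ((1/(n:ℝ)) * Real.exp (lam * (X n 0 ω i j : ℝ))) := by
      intro j
      have h := measurable_from_nat (mα := ENNReal.measurableSpace)
        (f := fun k : ℕ => ENNReal.ofReal ((1/(n:ℝ)) * Real.exp (lam * (k:ℝ))))
      simpa [Function.comp_def] using h.comp ((hER n).1 0 i j)
    have hmeasExp : ∀ j : ℕ, Measurable fun ω =>
        ENNReal.ofReal (Real.exp (lam * (X n 0 ω i j : ℝ))) := by
      intro j
      have h := measurable_from_nat (mα := ENNReal.measurableSpace)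
        (f := fun k : ℕ => ENNReal.ofReal (Real.exp (lam * (k:ℝ))))
      simpa [Function.comp_def] using h.comp ((hER n).1 0 i j)
    calc ∫⁻ ω, g (X n 0 ω) ∂ μ n
        ≤ ∫⁻ ω, ∑ j ∈ Finset.range n,
            ENNReal.ofReal ((1/(n:ℝ)) * Real.exp (lam * (X n 0 ω i j : ℝ))) ∂ μ n :=
          lintegral_mono hpt
      _ = ∑ j ∈ Finset.range n, ∫⁻ ω,
            ENNReal.ofReal ((1/(n:ℝ)) * Real.exp (lam * (X n 0 ω i j : ℝ))) ∂ μ n :=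
          lintegral_finset_sum _ (fun j _ => hmeasj j)
      _ ≤ ∑ _j ∈ Finset.range n, ENNReal.ofReal (1/(n:ℝ)) * ENNReal.ofReal C := by
          refine Finset.sum_le_sum fun j hj => ?_
          have heq : ∀ ω, ENNReal.ofReal ((1/(n:ℝ)) * Real.exp (lam * (X n 0 ω i j : ℝ)))
              = ENNReal.ofReal (1/(n:ℝ))
                  * ENNReal.ofReal (Real.exp (lam * (X n 0 ω i j : ℝ))) := fun ω =>
            ENNReal.ofReal_mul (by positivity)
          simp only [heq]
          rw [lintegral_const_mul _ (hmeasExp j)]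
          exact mul_le_mul_right (hmom n i hi j (Finset.mem_range.1 hj)) _
      _ ≤ ENNReal.ofReal C := by
          rw [Finset.sum_const, Finset.card_range, nsmul_eq_mul,
            ← ENNReal.ofReal_natCast n, ← ENNReal.ofReal_mul (by positivity),
            ← ENNReal.ofReal_mul (by positivity)]
          refine ENNReal.ofReal_le_ofReal (le_of_eq ?_)
          field_simp
  -- induction
  have hind : ∀ T : ℕ, Phi T + ∑ S ∈ Finset.range (T+1), Dd S
      ≤ aE ^ T * ENNReal.ofReal C := by
    intro T
    induction T with
    | zero => simpa using hbase
    | succ T ih =>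
      calc Phi (T+1) + ∑ S ∈ Finset.range (T+2), Dd S
          = (Phi (T+1) + Dd (T+1)) + ∑ S ∈ Finset.range (T+1), Dd S := by
            rw [Finset.sum_range_succ]; ring
        _ ≤ aE * Phi T + ∑ S ∈ Finset.range (T+1), Dd S := add_le_add_left (hrec T) _
        _ ≤ aE * Phi T + aE * ∑ S ∈ Finset.range (T+1), Dd S :=
            add_le_add le_rfl (le_mul_of_one_le_left' ha1)
        _ = aE * (Phi T + ∑ S ∈ Finset.range (T+1), Dd S) := by ring
        _ ≤ aE * (aE ^ T * ENNReal.ofReal C) := mul_le_mul_right ih _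
        _ = aE ^ (T+1) * ENNReal.ofReal C := by ring
  -- covering the target event
  have hsubset : {ω | ∃ T : ℕ, (T : ℝ) ≤ 2 * (mm : ℝ) * (n : ℝ) * t ∧
        z ≤ (degB n (X n T ω) i : ℝ) / (n : ℝ)}
      ⊆ ⋃ T ∈ Finset.range (N+1), ⋃ p ∈ (ERaux.Path n mm T).filter (badP T), cyl T p := by
    intro ω hω
    obtain ⟨T₀, hT₀, hz₀⟩ := hω
    have hex : ∃ T : ℕ, z ≤ (degB n (X n T ω) i : ℝ) / (n : ℝ) := ⟨T₀, hz₀⟩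
    have hTle : Nat.find hex ≤ T₀ := Nat.find_min' hex hz₀
    have hTN : Nat.find hex ≤ N := hTle.trans (Nat.le_floor hT₀)
    set T := Nat.find hex with hT
    have hpmem : (fun S => if S ≤ T then X n S ω else fun _ _ => 0) ∈ ERaux.Path n mm T :=
      ERaux.mem_Path
        (fun S hS => by rw [if_pos hS]; exact ERaux.mem_SFin ((hER n).2.1 S ω))
        (fun S hS => by rw [if_neg (by omega)])
    have hbadmem : badP T (fun S => if S ≤ T then X n S ω else fun _ _ => 0) := by
      simp only [hbad]
      constructor
      · intro S hS
        rw [if_pos hS.le]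
        have hSfind : S < Nat.find hex := by rw [← hT]; exact hS
        have hnot := Nat.find_min hex hSfind
        push_neg at hnot
        calc (degB n (X n S ω) i : ℝ) = ((degB n (X n S ω) i : ℝ) / n) * n := by field_simp
          _ < z * n := mul_lt_mul_of_pos_right hnot hn0
      · rw [if_pos le_rfl]
        have hspec : z ≤ (degB n (X n T ω) i : ℝ) / n := by rw [hT]; exact Nat.find_spec hex
        calc z * (n:ℝ) ≤ ((degB n (X n T ω) i : ℝ) / n) * n :=
              mul_le_mul_of_nonneg_right hspec hn0.le
          _ = (degB n (X n T ω) i : ℝ) := by field_simp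
    refine Set.mem_biUnion (Finset.mem_range.2 (Nat.lt_succ_of_le hTN)) ?_
    refine Set.mem_biUnion (Finset.mem_filter.2 ⟨hpmem, hbadmem⟩) ?_
    simp only [hcyl, mem_setOf_eq]
    intro S hS
    rw [if_pos hS]
  -- put it together
  have hbound : μ n {ω | ∃ T : ℕ, (T : ℝ) ≤ 2 * (mm : ℝ) * (n : ℝ) * t ∧
        z ≤ (degB n (X n T ω) i : ℝ) / (n : ℝ)}
      ≤ ENNReal.ofReal (Real.exp (-(lam * z))) * (aE ^ N * ENNReal.ofReal C) := by
    have h1 : μ n {ω | ∃ T : ℕ, (T : ℝ) ≤ 2 * (mm : ℝ) * (n : ℝ) * t ∧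
          z ≤ (degB n (X n T ω) i : ℝ) / (n : ℝ)}
        ≤ ∑ T ∈ Finset.range (N+1), ∑ p ∈ (ERaux.Path n mm T).filter (badP T),
            μ n (cyl T p) :=
      (measure_mono hsubset).trans ((measure_biUnion_finset_le _ _).trans
        (Finset.sum_le_sum fun T _ => measure_biUnion_finset_le _ _))
    have h2 : ∀ T : ℕ, ∀ p ∈ (ERaux.Path n mm T).filter (badP T),
        μ n (cyl T p) ≤ ENNReal.ofReal (Real.exp (-(lam * z))) * (μ n (cyl T p) * g (p T)) := by
      intro T p hp
      have hbadp := (Finset.mem_filter.1 hp).2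
      rw [hbad] at hbadp
      have hdeg : z * n ≤ (degB n (p T) i : ℝ) := hbadp.2
      have hone : (1:ℝ≥0∞) ≤ ENNReal.ofReal (Real.exp (-(lam * z))) * g (p T) := by
        simp only [hg]
        rw [← ENNReal.ofReal_mul (Real.exp_pos _).le, ← Real.exp_add]
        refine ENNReal.one_le_ofReal.2 (Real.one_le_exp ?_)
        have hzled : z ≤ (degB n (p T) i : ℝ) / n := by
          rw [le_div_iff₀ hn0]; exact hdeg
        have : lam * z ≤ lam * ((degB n (p T) i : ℝ) / n) :=
          mul_le_mul_of_nonneg_left hzled hlam.le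
        have heq : lam * (degB n (p T) i : ℝ) / n = lam * ((degB n (p T) i : ℝ) / n) := by
          ring
        rw [heq]
        linarith
      calc μ n (cyl T p) = μ n (cyl T p) * 1 := (mul_one _).symm
        _ ≤ μ n (cyl T p) * (ENNReal.ofReal (Real.exp (-(lam * z))) * g (p T)) :=
            mul_le_mul_right hone _
        _ = ENNReal.ofReal (Real.exp (-(lam * z))) * (μ n (cyl T p) * g (p T)) := by ring
    calc μ n {ω | ∃ T : ℕ, (T : ℝ) ≤ 2 * (mm : ℝ) * (n : ℝ) * t ∧
            z ≤ (degB n (X n T ω) i : ℝ) / (n : ℝ)}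
        ≤ ∑ T ∈ Finset.range (N+1), ∑ p ∈ (ERaux.Path n mm T).filter (badP T),
            μ n (cyl T p) := h1
      _ ≤ ∑ T ∈ Finset.range (N+1), ∑ p ∈ (ERaux.Path n mm T).filter (badP T),
            ENNReal.ofReal (Real.exp (-(lam * z))) * (μ n (cyl T p) * g (p T)) :=
          Finset.sum_le_sum fun T _ => Finset.sum_le_sum fun p hp => h2 T p hp
      _ = ENNReal.ofReal (Real.exp (-(lam * z))) * ∑ T ∈ Finset.range (N+1), Dd T := by
          rw [Finset.mul_sum]
          refine Finset.sum_congr rfl fun T _ => ?_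
          simp only [hDd]; rw [Finset.mul_sum]
      _ ≤ ENNReal.ofReal (Real.exp (-(lam * z))) * (aE ^ N * ENNReal.ofReal C) := by
          refine mul_le_mul_right ?_ _
          exact le_trans (le_add_self) (hind N)
  refine hbound.trans ?_
  -- final numeric comparison
  have hkey : (mm:ℝ) * Real.exp (lam/(n:ℝ)) ≤ 2 * mm + n * κ := by nlinarith
  have hNc : (N : ℝ) * cc ≤ 2 * lam * κ * t := by
    have hNle : (N : ℝ) ≤ 2 * (mm:ℝ) * n * t := Nat.floor_le (by positivity)
    have h1 : (N:ℝ) * cc ≤ (2 * (mm:ℝ) * n * t) * cc := mul_le_mul_of_nonneg_right hNle hcc0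
    refine h1.trans ?_
    calc 2 * (mm:ℝ) * n * t * cc
        = (2 * t * lam * κ) * ((mm * Real.exp (lam/(n:ℝ))) / (2 * mm + n * κ)) := by
          rw [hcc]; field_simp
      _ ≤ (2 * t * lam * κ) * 1 :=
          mul_le_mul_of_nonneg_left ((div_le_one hMpos).2 hkey) (by positivity)
      _ = 2 * lam * κ * t := by ring
  have haEN : aE ^ N = ENNReal.ofReal (Real.exp ((N:ℝ) * cc)) := by
    rw [haE, ← ENNReal.ofReal_pow (Real.exp_pos cc).le, ← Real.exp_nat_mul]
  rw [haEN, ← ENNReal.ofReal_mul (Real.exp_pos _).le, ← ENNReal.ofReal_mul (Real.exp_pos _).le]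
  refine ENNReal.ofReal_le_ofReal ?_
  have h5 : Real.exp ((N:ℝ)*cc) ≤ Real.exp (2*lam*κ*t) := Real.exp_le_exp.2 hNc
  calc Real.exp (-(lam * z)) * (Real.exp ((N:ℝ)*cc) * C)
      = Real.exp ((N:ℝ)*cc) * (C * Real.exp (-(lam * z))) := by ring
    _ ≤ Real.exp (2*lam*κ*t) * (C * Real.exp (-(lam * z))) :=
        mul_le_mul_of_nonneg_right h5 (mul_nonneg hC0 (Real.exp_pos _).le)
    _ = C * Real.exp (2 * lam * κ * t) * Real.exp (-(lam * z)) := by ring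


end
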